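/- Let a be the monomial ideal of R with exponent set A and J the monomial ideal with exponent set B, with a ⊆ √J. For every u ∈ σ^∨ \ Q(B) there exists e ≥ 1 such that λ_A(u) ≤ ν_a^J(p^e)/p^e. -/

import Mathlib

open Finset Filter Pointwise

noncomputable section

namespace Paper

variable {d n : ℕ}

/-- The standard inner product pairing on `ℝ^d`. -/
def pair (u w : Fin d → ℝ) : ℝ := ∑ i, u i * w i

/-- The coercion `ℤ^d → ℝ^d`. -/
def toR (u : Fin d → ℤ) : Fin d → ℝ := fun i => (u i : ℝ)

/-- The cone generated by the integer vectors `v 1, …, v n`. -/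
def cone (v : Fin n → Fin d → ℤ) : Set (Fin d → ℝ) :=
  {x | ∃ c : Fin n → ℝ, (∀ j, 0 ≤ c j) ∧ x = ∑ j, c j • toR (v j)}

/-- The dual cone `σ^∨ = {u | ⟨u, x⟩ ≥ 0 for all x ∈ σ}`. -/
def dualCone (v : Fin n → Fin d → ℤ) : Set (Fin d → ℝ) :=
  {u | ∀ x ∈ cone v, 0 ≤ pair u x}

/-- Strong convexity of the cone generated by `v`. -/
def StronglyConvex (v : Fin n → Fin d → ℤ) : Prop :=
  ∀ x ∈ cone v, -x ∈ cone v → x = 0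

/-- An integer vector is primitive if the gcd of its coordinates is 1. -/
def IsPrimitive (w : Fin d → ℤ) : Prop := Finset.univ.gcd w = 1

/-- The cone generated by `v` is `d`-dimensional. -/
def FullDim (v : Fin n → Fin d → ℤ) : Prop :=
  Submodule.span ℝ (Set.range fun j => toR (v j)) = ⊤

/-- The Newton polyhedron `P(A) = conv(A) + σ^∨`. -/
def newton (v : Fin n → Fin d → ℤ) (A : Finset (Fin d → ℤ)) : Set (Fin d → ℝ) :=
  convexHull ℝ (toR '' ↑A) + dualCone v

/-- The set `Q(A) = ⋃_{a ∈ A} (a + σ^∨)`. -/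
def QSet (v : Fin n → Fin d → ℤ) (A : Finset (Fin d → ℤ)) : Set (Fin d → ℝ) :=
  ⋃ a ∈ A, (toR a +ᵥ dualCone v)

/-- `λ_A(u) = sup {λ > 0 | u ∈ λ·P(A)}` (and `0` if no such `λ` exists;
note `Real.sSup` of the empty set is `0`). -/
def lam (v : Fin n → Fin d → ℤ) (A : Finset (Fin d → ℤ)) (u : Fin d → ℝ) : ℝ :=
  sSup {l : ℝ | 0 < l ∧ u ∈ l • newton v A}

/-- `Q(m)` for the maximal monomial ideal, whose exponent set is
`(σ^∨ ∩ ℤ^d) \ {0}`. -/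
def Qm (v : Fin n → Fin d → ℤ) : Set (Fin d → ℝ) :=
  ⋃ a ∈ {a : Fin d → ℤ | toR a ∈ dualCone v ∧ a ≠ 0}, (toR a +ᵥ dualCone v)

/-- The set `O = {u ∈ σ^∨ | ⟨u, v_j⟩ ≥ 1 for some j}`. -/
def OSet (v : Fin n → Fin d → ℤ) : Set (Fin d → ℝ) :=
  {u ∈ dualCone v | ∃ j, 1 ≤ pair u (toR (v j))}

/-- The additive submonoid `σ^∨ ∩ ℤ^d` of `ℤ^d`. -/
def latt (v : Fin n → Fin d → ℤ) : AddSubmonoid (Fin d → ℤ) where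
  carrier := {u | toR u ∈ dualCone v}
  zero_mem' := by
    intro x hx
    simp [pair, toR]
  add_mem' := by
    intro a b ha hb x hx
    have h : pair (toR (a + b)) x = pair (toR a) x + pair (toR b) x := by
      simp [pair, toR, add_mul, Finset.sum_add_distrib]
    have h2 := add_nonneg (ha x hx) (hb x hx)
    rw [h]
    exact h2

/-- The toric ring `R = k[σ^∨ ∩ ℤ^d]`, as the monoid algebra of the
additive monoid `σ^∨ ∩ ℤ^d` over `k`. -/
abbrev Toric (k : Type) [Field k] (v : Fin n → Fin d → ℤ) : Type :=
  AddMonoidAlgebra k (latt v)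

/-- The monomial ideal of `R` with exponent set `A`: the ideal generated by
the monomials `X^a`, `a ∈ A`. -/
def monIdeal (k : Type) [Field k] (v : Fin n → Fin d → ℤ) (A : Finset (Fin d → ℤ)) :
    Ideal (Toric k v) :=
  Ideal.span {x | ∃ a : latt v, (a : Fin d → ℤ) ∈ A ∧ x = AddMonoidAlgebra.single a 1}

/-- The maximal monomial ideal of `R`, generated by all monomials `X^u`
with `u ∈ (σ^∨ ∩ ℤ^d) \ {0}`. -/
def maxMonIdeal (k : Type) [Field k] (v : Fin n → Fin d → ℤ) : Ideal (Toric k v) :=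
  Ideal.span {x | ∃ a : latt v, a ≠ 0 ∧ x = AddMonoidAlgebra.single a 1}

/-- The bracket power `J^{[q]}`: the ideal generated by the `q`-th powers of
elements of `J`. -/
def bracket {S : Type*} [CommRing S] (J : Ideal S) (q : ℕ) : Ideal S :=
  Ideal.span ((fun x => x ^ q) '' (J : Set S))

/-- `ν_a^J(q) = max {r ∈ ℕ | a^r ⊄ J^{[q]}}`. -/
def nuF {S : Type*} [CommRing S] (a J : Ideal S) (q : ℕ) : ℕ :=
  sSup {r : ℕ | ¬ a ^ r ≤ bracket J q}



/-! ### Auxiliary lemmas -/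

lemma pair_add_left (a b x : Fin d → ℝ) : pair (a + b) x = pair a x + pair b x := by
  simp [pair, add_mul, Finset.sum_add_distrib]

lemma pair_smul_left (c : ℝ) (a x : Fin d → ℝ) : pair (c • a) x = c * pair a x := by
  simp [pair, Finset.mul_sum, mul_assoc]

lemma dc_add {v : Fin n → Fin d → ℤ} {a b : Fin d → ℝ} (ha : a ∈ dualCone v)
    (hb : b ∈ dualCone v) : a + b ∈ dualCone v := by
  intro x hx
  rw [pair_add_left]
  exact add_nonneg (ha x hx) (hb x hx)

lemma dc_smul {v : Fin n → Fin d → ℤ} {c : ℝ} (hc : 0 ≤ c) {a : Fin d → ℝ}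
    (ha : a ∈ dualCone v) : c • a ∈ dualCone v := by
  intro x hx
  rw [pair_smul_left]
  exact mul_nonneg hc (ha x hx)

lemma dc_sum {v : Fin n → Fin d → ℤ} {ι : Type*} (T : Finset ι) (g : ι → Fin d → ℝ)
    (c : ι → ℝ) (hc : ∀ x ∈ T, 0 ≤ c x) (hg : ∀ x ∈ T, g x ∈ dualCone v) :
    (∑ x ∈ T, c x • g x) ∈ dualCone v := by
  classical
  induction T using Finset.induction_on with
  | empty => intro x hx; simp [pair]
  | insert _ _ hni ih =>
      rw [Finset.sum_insert hni]
      exact dc_add (dc_smul (hc _ (Finset.mem_insert_self _ _)) (hg _ (Finset.mem_insert_self _ _)))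
        (ih (fun x hx => hc x (Finset.mem_insert_of_mem hx))
            (fun x hx => hg x (Finset.mem_insert_of_mem hx)))

lemma toR_add (a b : Fin d → ℤ) : toR (a + b) = toR a + toR b := by
  funext i; simp [toR]

lemma toR_nsmul (m : ℕ) (a : Fin d → ℤ) : toR (m • a) = (m : ℝ) • toR a := by
  funext i; simp [toR]

lemma toR_sum {ι : Type*} (T : Finset ι) (f : ι → Fin d → ℤ) :
    toR (∑ x ∈ T, f x) = ∑ x ∈ T, toR (f x) := by
  funext i
  simp [toR, Finset.sum_apply]

lemma toR_injective : Function.Injective (toR (d := d)) := by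
  intro a b h
  funext i
  have h2 : ((a i : ℝ)) = (b i : ℝ) := congrFun h i
  exact_mod_cast h2

/-- If `(1+ε)u ∈ Q(B)` for every `ε > 0`, then `u ∈ Q(B)`. -/
lemma exists_eps (v : Fin n → Fin d → ℤ) (B : Finset (Fin d → ℤ)) (u : Fin d → ℝ)
    (hu : u ∈ dualCone v) (huQ : u ∉ QSet v B) :
    ∃ ε : ℝ, 0 < ε ∧ (1 + ε) • u ∉ QSet v B := by
  by_contra hcon
  push_neg at hcon
  have hsel : ∀ m : ℕ, ∃ b ∈ B, (1 + 1 / ((m : ℝ) + 1)) • u - toR b ∈ dualCone v := by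
    intro m
    have hε : (0:ℝ) < 1 / ((m:ℝ) + 1) := by positivity
    have hQ := hcon _ hε
    rw [QSet, Set.mem_iUnion₂] at hQ
    rcases hQ with ⟨b, hb, hmem⟩
    rcases Set.mem_vadd_set.mp hmem with ⟨y, hy, hxy⟩
    refine ⟨b, hb, ?_⟩
    have hyy : (1 + 1 / ((m:ℝ) + 1)) • u - toR b = y := by
      have : toR b + y = (1 + 1 / ((m:ℝ) + 1)) • u := hxy
      rw [← this]; abel
    rwa [hyy]
  choose bf hbf hdc using hsel
  have hpig : ∃ b ∈ B, {m : ℕ | bf m = b}.Infinite := by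
    by_contra hfin
    push_neg at hfin
    have hUfin : (⋃ b ∈ (B : Finset (Fin d → ℤ)), {m : ℕ | bf m = b}).Finite := by
      apply Set.Finite.biUnion B.finite_toSet
      intro b hb
      exact hfin b hb
    have hsub : (Set.univ : Set ℕ) ⊆ ⋃ b ∈ (B : Finset (Fin d → ℤ)), {m : ℕ | bf m = b} := by
      intro m _
      exact Set.mem_biUnion (hbf m) rfl
    exact Set.infinite_univ (Set.Finite.subset hUfin hsub)
  rcases hpig with ⟨b, hbB, hinf⟩
  apply huQ
  rw [QSet, Set.mem_iUnion₂]
  refine ⟨b, hbB, ?_⟩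
  rw [Set.mem_vadd_set]
  refine ⟨u - toR b, ?_, by show toR b + (u - toR b) = u; abel⟩
  intro x hx
  by_contra hneg
  push_neg at hneg
  set P := pair (u - toR b) x with hP
  have hP0 : P < 0 := hneg
  set c := pair u x with hc
  have hc0 : 0 ≤ c := hu x hx
  obtain ⟨m, hmmem, hmgt⟩ := hinf.exists_gt ⌈c / (-P)⌉₊
  have hmR : c / (-P) < (m : ℝ) + 1 := by
    have h1 : c / (-P) ≤ (⌈c / (-P)⌉₊ : ℝ) := Nat.le_ceil _
    have h2 : ((⌈c / (-P)⌉₊ : ℕ) : ℝ) < (m : ℝ) := by exact_mod_cast hmgt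
    linarith
  have hkey := hdc m x hx
  have hbfm : bf m = b := hmmem
  rw [hbfm] at hkey
  have hexp : pair ((1 + 1 / ((m:ℝ) + 1)) • u - toR b) x = P + (1 / ((m:ℝ)+1)) * c := by
    have h3 : (1 + 1 / ((m:ℝ) + 1)) • u - toR b = (u - toR b) + (1 / ((m:ℝ)+1)) • u := by
      rw [add_smul, one_smul]; abel
    rw [h3, pair_add_left, pair_smul_left, ← hP, ← hc]
  rw [hexp] at hkey
  have hm1 : (0:ℝ) < (m:ℝ) + 1 := by positivity
  have : c < (-P) * ((m:ℝ) + 1) := by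
    rw [div_lt_iff₀ (by linarith : (0:ℝ) < -P)] at hmR
    linarith [hmR]
  have : (1 / ((m:ℝ)+1)) * c < -P := by
    rw [div_mul_eq_mul_div, one_mul, div_lt_iff₀ hm1]
    linarith
  linarith

lemma toric_charP (k : Type) [Field k] (p : ℕ) [CharP k p] (v : Fin n → Fin d → ℤ) :
    CharP (Toric k v) p := by
  have hinj : Function.Injective (algebraMap k (Toric k v)) := by
    exact (algebraMap k (Toric k v)).injective
  exact charP_of_injective_algebraMap hinj p

lemma single_prod_pow {k : Type} [Field k] {M : Type*} [AddCommMonoid M] {ι : Type*}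
    (T : Finset ι) (g : ι → M) (r : ι → ℕ) :
    (∏ x ∈ T, (AddMonoidAlgebra.single (g x) (1:k)) ^ (r x))
      = AddMonoidAlgebra.single (∑ x ∈ T, r x • g x) 1 := by
  classical
  induction T using Finset.induction_on with
  | empty => simp [AddMonoidAlgebra.one_def]
  | insert _ _ hni ih =>
      rw [Finset.prod_insert hni, ih, AddMonoidAlgebra.single_pow,
        AddMonoidAlgebra.single_mul_single, Finset.sum_insert hni]
      simp

lemma mem_monomial_span_exists {k : Type} [Field k] {M : Type*} [AddCommMonoid M]
    (E : Set M) (w : M)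
    (h : AddMonoidAlgebra.single w (1:k) ∈
      Ideal.span {x : AddMonoidAlgebra k M | ∃ e ∈ E, x = AddMonoidAlgebra.single e 1}) :
    ∃ e ∈ E, ∃ s : M, w = e + s := by
  classical
  set U : Set M := {x | ∃ e ∈ E, ∃ s : M, x = e + s} with hU
  have key : ∀ (f : AddMonoidAlgebra k M),
      f ∈ Ideal.span {x : AddMonoidAlgebra k M | ∃ e ∈ E, x = AddMonoidAlgebra.single e 1} →
      ∀ x ∈ f.coeff.support, x ∈ U := by
    intro f hf
    refine Submodule.span_induction ?_ ?_ ?_ ?_ hf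
    · rintro x ⟨e, he, rfl⟩ y hy
      have hy' : y = e := by
        have := Finsupp.support_single_subset hy
        simpa using this
      exact ⟨e, he, 0, by simp [hy']⟩
    · simp
    · intro f g _ _ hf hg x hx
      rcases Finset.mem_union.mp (Finsupp.support_add hx) with h1 | h1
      · exact hf x h1
      · exact hg x h1
    · intro r f _ hf x hx
      rw [smul_eq_mul] at hx
      have hx2 := AddMonoidAlgebra.support_coeff_mul_subset r f hx
      rcases Finset.mem_add.mp hx2 with ⟨a, ha, b, hb, rfl⟩
      rcases hf b hb with ⟨e, he, s, rfl⟩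
      exact ⟨e, he, s + a, by abel⟩
  have hw : w ∈ (AddMonoidAlgebra.single w (1:k)).coeff.support := by
    rw [AddMonoidAlgebra.coeff_single, Finsupp.support_single_ne_zero _ (one_ne_zero)]
    simp
  rcases key _ h w hw with ⟨e, he, s, hs⟩
  exact ⟨e, he, s, hs⟩

lemma span_set_pow {S : Type*} [CommRing S] (G : Set S) (m : ℕ) :
    Ideal.span G ^ m = Ideal.span (G ^ m) := by
  induction m with
  | zero => simp [Ideal.one_eq_top]
  | succ m ih =>
      rw [pow_succ, ih, Ideal.span_mul_span', pow_succ]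

lemma pow_mem_span_pow_image {S : Type*} [CommRing S] (p : ℕ) [Fact p.Prime] [CharP S p]
    (e : ℕ) (G : Set S) {f : S} (hf : f ∈ Ideal.span G) :
    f ^ (p ^ e) ∈ Ideal.span ((fun x => x ^ (p ^ e)) '' G) := by
  refine Submodule.span_induction ?_ ?_ ?_ ?_ hf
  · intro x hx; exact Ideal.subset_span ⟨x, hx, rfl⟩
  · rw [zero_pow (pow_ne_zero _ (Fact.out : p.Prime).ne_zero)]; exact zero_mem _
  · intro x y _ _ hx hy
    rw [add_pow_char_pow]
    exact add_mem hx hy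
  · intro a x _ hx
    rw [smul_eq_mul, mul_pow]
    exact Ideal.mul_mem_left _ _ hx

lemma prod_pow_mem_pow {S : Type*} [CommRing S] (I : Ideal S) {ι : Type*} (T : Finset ι)
    (f : ι → S) (r : ι → ℕ) (hf : ∀ x ∈ T, f x ∈ I) :
    (∏ x ∈ T, f x ^ r x) ∈ I ^ (∑ x ∈ T, r x) := by
  classical
  induction T using Finset.induction_on with
  | empty => simp
  | insert _ _ hni ih =>
      rw [Finset.prod_insert hni, Finset.sum_insert hni, pow_add]
      exact Ideal.mul_mem_mul (Ideal.pow_mem_pow (hf _ (Finset.mem_insert_self _ _)) _)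
        (ih (fun x hx => hf x (Finset.mem_insert_of_mem hx)))


/-- for every `u ∈ σ^∨ \ Q(B)` there exists `e ≥ 1` with
`λ_A(u) ≤ ν_a^J(p^e)/p^e`. -/
theorem lam_le_nu
    (d n p : ℕ) (hd : 1 ≤ d) (hp : p.Prime)
    (k : Type) [Field k] [CharP k p] [ExpChar k p] [PerfectRing k p]
    (v : Fin n → Fin d → ℤ)
    (hsc : StronglyConvex v) (hprim : ∀ j, IsPrimitive (v j))
    (A B : Finset (Fin d → ℤ))
    (hAne : A.Nonempty) (hBne : B.Nonempty)
    (hAl : ∀ a ∈ A, toR a ∈ dualCone v) (hBl : ∀ b ∈ B, toR b ∈ dualCone v)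
    (ha0 : monIdeal k v A ≠ ⊥) (haP : monIdeal k v A ≠ ⊤)
    (hJ0 : monIdeal k v B ≠ ⊥) (hJP : monIdeal k v B ≠ ⊤)
    (hrad : monIdeal k v A ≤ (monIdeal k v B).radical) :
    ∀ u ∈ dualCone v \ QSet v B,
      ∃ e : ℕ, 1 ≤ e ∧
        lam v A u ≤ (nuF (monIdeal k v A) (monIdeal k v B) (p ^ e) : ℝ) / (p ^ e : ℝ) := by
  intro u hu
  haveI : Fact p.Prime := ⟨hp⟩
  haveI hCharP : CharP (Toric k v) p := toric_charP k p v
  classical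
  set S := {l : ℝ | 0 < l ∧ u ∈ l • newton v A} with hSdef
  have hlamS : lam v A u = sSup S := rfl
  by_cases hne : S.Nonempty
  swap
  · refine ⟨1, le_refl 1, ?_⟩
    rw [hlamS, Set.not_nonempty_iff_eq_empty.mp hne, Real.sSup_empty]
    positivity
  by_cases hbdd : BddAbove S
  swap
  · refine ⟨1, le_refl 1, ?_⟩
    rw [hlamS, Real.sSup_of_not_bddAbove hbdd]
    positivity
  set lambda := sSup S with hlamdef
  obtain ⟨l₀, hl₀⟩ := hne
  have hlampos : 0 < lambda := lt_of_lt_of_le hl₀.1 (le_csSup hbdd hl₀)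
  obtain ⟨ε, hε, hεQ⟩ := exists_eps v B u hu.1 hu.2
  have h1ε : (1:ℝ) < 1 + ε := by linarith
  obtain ⟨l, hlS, hll⟩ := exists_lt_of_lt_csSup ⟨l₀, hl₀⟩
    (show lambda / (1+ε) < lambda from div_lt_self hlampos h1ε)
  have hl0 : 0 < l := hlS.1
  set μ := (1 + ε) * l with hμdef
  have hmugt : lambda < μ := by
    rw [div_lt_iff₀ (by linarith : (0:ℝ) < 1 + ε)] at hll
    rw [hμdef]; linarith
  have hμ0 : 0 < μ := by rw [hμdef]; exact mul_pos (by linarith) hl0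
  -- decompose u via the Newton polyhedron
  obtain ⟨z, hz, hzu⟩ := Set.mem_smul_set.mp hlS.2
  rw [newton, Set.mem_add] at hz
  obtain ⟨c, hc, y, hy, hcyz⟩ := hz
  rw [show toR '' (A : Set (Fin d → ℤ)) = ((A.image toR : Finset (Fin d → ℝ)) : Set (Fin d → ℝ))
      from (Finset.coe_image).symm, Finset.convexHull_eq] at hc
  obtain ⟨wt, hwt0, hwt1, hctr⟩ := hc
  rw [Finset.centerMass_eq_of_sum_1 _ _ hwt1] at hctr
  set w' : (Fin d → ℤ) → ℝ := fun a => wt (toR a) with hw'def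
  have hinj : ∀ x ∈ A, ∀ y' ∈ A, toR x = toR y' → x = y' := fun x _ y' _ h => toR_injective h
  have hsum1 : (∑ a ∈ A, w' a) = 1 := by
    rw [← hwt1, Finset.sum_image hinj]
  have hcsum : c = ∑ a ∈ A, w' a • toR a := by
    rw [← hctr, Finset.sum_image hinj]
    simp [hw'def]
  have hw'0 : ∀ a ∈ A, 0 ≤ w' a := fun a ha => hwt0 _ (Finset.mem_image_of_mem _ ha)
  -- choose e
  set m := A.card with hmdef
  have hm1 : 1 ≤ m := Finset.card_pos.mpr hAne
  obtain ⟨e₀, he₀⟩ := pow_unbounded_of_one_lt (R := ℝ) (y := (p:ℝ)) ((m:ℝ) / (μ - lambda))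
    (by exact_mod_cast hp.one_lt)
  set e := max e₀ 1 with hedef
  refine ⟨e, le_max_right _ _, ?_⟩
  set q : ℕ := p ^ e with hqdef
  have hq0 : 0 < q := by rw [hqdef]; exact pow_pos hp.pos e
  have hq1 : 1 ≤ q := hq0
  have hqR : (0:ℝ) < (q:ℝ) := by exact_mod_cast hq0
  have hqm : (m:ℝ) < (q:ℝ) * (μ - lambda) := by
    have hqce : (m:ℝ) / (μ - lambda) < (q:ℝ) := by
      calc (m:ℝ) / (μ - lambda) < (p:ℝ) ^ e₀ := he₀
        _ ≤ (p:ℝ) ^ e := pow_le_pow_right₀ (by exact_mod_cast hp.one_le) (le_max_left _ _)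
        _ = (q:ℝ) := by rw [hqdef]; push_cast; ring
    rw [div_lt_iff₀ (by linarith : (0:ℝ) < μ - lambda)] at hqce
    linarith
  -- the witness lattice point
  set r : (Fin d → ℤ) → ℕ := fun a => ⌊(q:ℝ) * μ * w' a⌋₊ with hrdef
  set what : latt v := ∑ t ∈ A.attach, r t.1 • (⟨t.1, hAl t.1 t.2⟩ : latt v) with hwhatdef
  set rt : ℕ := ∑ t ∈ A.attach, r t.1 with hrtdef
  have hcoeff0 : ∀ a ∈ A, 0 ≤ (q:ℝ) * μ * w' a := fun a ha =>
    mul_nonneg (mul_nonneg hqR.le hμ0.le) (hw'0 a ha)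
  have hfloor_le : ∀ a ∈ A, ((r a : ℝ)) ≤ (q:ℝ) * μ * w' a := by
    intro a ha
    have h1 : ((⌊(q:ℝ) * μ * w' a⌋₊ : ℕ) : ℝ) ≤ (q:ℝ) * μ * w' a := Nat.floor_le (hcoeff0 a ha)
    have h2 : r a = ⌊(q:ℝ) * μ * w' a⌋₊ := by rw [hrdef]
    rw [h2]; exact h1
  have hfloor_gt : ∀ a ∈ A, (q:ℝ) * μ * w' a - 1 < ((r a : ℝ)) := by
    intro a ha
    have h1 := Nat.lt_floor_add_one ((q:ℝ) * μ * w' a)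
    have h2 : r a = ⌊(q:ℝ) * μ * w' a⌋₊ := by rw [hrdef]
    rw [h2]; linarith
  -- toR of the witness point
  have hwtoR : toR (what : Fin d → ℤ) = ∑ a ∈ A, (r a : ℝ) • toR a := by
    rw [hwhatdef, AddSubmonoidClass.coe_finset_sum, toR_sum,
      ← Finset.sum_attach A (fun a => (r a : ℝ) • toR a)]
    refine Finset.sum_congr rfl fun t _ => ?_
    have h3 : ((r t.1 • (⟨t.1, hAl t.1 t.2⟩ : latt v) : latt v) : Fin d → ℤ) = r t.1 • t.1 := rfl
    rw [h3, toR_nsmul]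
  -- key membership: q(1+ε)u - w ∈ dualCone
  have hu' : (1 + ε) • u = μ • c + μ • y := by
    rw [← hzu, ← hcyz, smul_smul, ← hμdef, smul_add]
  have hKey : (q:ℝ) • ((1 + ε) • u) - toR (what : Fin d → ℤ) ∈ dualCone v := by
    have hqu : (q:ℝ) • ((1 + ε) • u)
        = (∑ a ∈ A, ((q:ℝ) * μ * w' a) • toR a) + ((q:ℝ) * μ) • y := by
      rw [hu', smul_add, smul_smul, smul_smul, hcsum, Finset.smul_sum]
      congr 1
      refine Finset.sum_congr rfl fun a _ => ?_
      rw [smul_smul]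
    have hexp : (q:ℝ) • ((1 + ε) • u) - toR (what : Fin d → ℤ)
        = (∑ a ∈ A, ((q:ℝ) * μ * w' a - (r a : ℝ)) • toR a) + ((q:ℝ) * μ) • y := by
      rw [hqu, hwtoR]
      have h4 : ∑ a ∈ A, ((q:ℝ) * μ * w' a - (r a : ℝ)) • toR a
          = ∑ a ∈ A, (((q:ℝ) * μ * w' a) • toR a - (r a : ℝ) • toR a) :=
        Finset.sum_congr rfl fun a _ => sub_smul _ _ _
      rw [h4, Finset.sum_sub_distrib]
      abel
    rw [hexp]
    refine dc_add (dc_sum A _ _ (fun a ha => ?_) (fun a ha => hAl a ha))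
      (dc_smul (mul_nonneg hqR.le hμ0.le) hy)
    have := hfloor_le a ha
    linarith
  -- lower bound on rt
  have hrt' : (rt : ℝ) = ∑ a ∈ A, (r a : ℝ) := by
    rw [hrtdef]
    rw [Finset.sum_attach A r]
    push_cast
    rfl
  have hrtge : (q:ℝ) * lambda ≤ (rt:ℝ) := by
    have h2 : ∑ a ∈ A, ((q:ℝ) * μ * w' a - 1) < ∑ a ∈ A, (r a : ℝ) :=
      Finset.sum_lt_sum_of_nonempty hAne hfloor_gt
    have h3 : ∑ a ∈ A, ((q:ℝ) * μ * w' a - 1) = (q:ℝ) * μ - (m:ℝ) := by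
      rw [Finset.sum_sub_distrib, ← Finset.mul_sum, hsum1, mul_one, Finset.sum_const,
        nsmul_eq_mul, mul_one, hmdef]
    rw [hrt']
    nlinarith [hqm, h2, h3]
  -- the monomial lies in a^rt
  have hmono : AddMonoidAlgebra.single what (1:k) ∈ (monIdeal k v A) ^ rt := by
    have hprd := prod_pow_mem_pow (monIdeal k v A) A.attach
      (fun t => AddMonoidAlgebra.single (⟨t.1, hAl t.1 t.2⟩ : latt v) (1:k))
      (fun t => r t.1)
      (fun t _ => Ideal.subset_span ⟨⟨t.1, hAl t.1 t.2⟩, t.2, rfl⟩)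
    rw [single_prod_pow] at hprd
    rw [hwhatdef, hrtdef]
    exact hprd
  -- the monomial is not in the bracket power of J
  have hnotin : AddMonoidAlgebra.single what (1:k) ∉ bracket (monIdeal k v B) q := by
    intro hin
    have hle : bracket (monIdeal k v B) q ≤ Ideal.span ((fun x => x ^ q) ''
        {x : Toric k v | ∃ b : latt v, (b : Fin d → ℤ) ∈ B ∧ x = AddMonoidAlgebra.single b 1}) := by
      rw [bracket]
      apply Ideal.span_le.mpr
      rintro yy ⟨f, hf, rfl⟩
      rw [hqdef]
      exact pow_mem_span_pow_image p e
        {x : Toric k v | ∃ b : latt v, (b : Fin d → ℤ) ∈ B ∧ x = AddMonoidAlgebra.single b 1}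
        (f := f) hf
    have himg : ((fun x => x ^ q) ''
        {x : Toric k v | ∃ b : latt v, (b : Fin d → ℤ) ∈ B ∧ x = AddMonoidAlgebra.single b 1})
        = {x : Toric k v | ∃ e' ∈ {e' : latt v | ∃ b : latt v, (b : Fin d → ℤ) ∈ B ∧ e' = q • b},
            x = AddMonoidAlgebra.single e' 1} := by
      ext x
      constructor
      · rintro ⟨-, ⟨b, hb, rfl⟩, rfl⟩
        refine ⟨q • b, ⟨b, hb, rfl⟩, ?_⟩
        show AddMonoidAlgebra.single b (1:k) ^ q = AddMonoidAlgebra.single (q • b) 1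
        rw [AddMonoidAlgebra.single_pow, one_pow]
      · rintro ⟨-, ⟨b, hb, rfl⟩, rfl⟩
        refine ⟨AddMonoidAlgebra.single b 1, ⟨b, hb, rfl⟩, ?_⟩
        show AddMonoidAlgebra.single b (1:k) ^ q = AddMonoidAlgebra.single (q • b) 1
        rw [AddMonoidAlgebra.single_pow, one_pow]
    have hin2 := hle hin
    rw [himg] at hin2
    obtain ⟨e', ⟨b, hb, rfl⟩, s, hws⟩ := mem_monomial_span_exists _ _ hin2
    -- derive the contradiction with hεQ
    apply hεQ
    rw [QSet, Set.mem_iUnion₂]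
    refine ⟨(b : Fin d → ℤ), hb, ?_⟩
    rw [Set.mem_vadd_set]
    have hcoe : toR (what : Fin d → ℤ) = (q:ℝ) • toR (b : Fin d → ℤ) + toR (s : Fin d → ℤ) := by
      have h5 : (what : Fin d → ℤ) = q • (b : Fin d → ℤ) + (s : Fin d → ℤ) := by
        rw [hws]; rfl
      rw [h5, toR_add, toR_nsmul]
    have hsd : toR (s : Fin d → ℤ) ∈ dualCone v := s.2
    have hqmem : (q:ℝ) • ((1 + ε) • u - toR (b : Fin d → ℤ)) ∈ dualCone v := by
      have h6 : (q:ℝ) • ((1 + ε) • u - toR (b : Fin d → ℤ))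
          = ((q:ℝ) • ((1 + ε) • u) - toR (what : Fin d → ℤ)) + toR (s : Fin d → ℤ) := by
        rw [smul_sub, hcoe]; abel
      rw [h6]
      exact dc_add hKey hsd
    have h7 : (1 + ε) • u - toR (b : Fin d → ℤ)
        = (q:ℝ)⁻¹ • ((q:ℝ) • ((1 + ε) • u - toR (b : Fin d → ℤ))) := by
      rw [smul_smul, inv_mul_cancel₀ (ne_of_gt hqR), one_smul]
    refine ⟨(1 + ε) • u - toR (b : Fin d → ℤ), ?_, by
      show toR (b : Fin d → ℤ) + ((1 + ε) • u - toR (b : Fin d → ℤ)) = (1 + ε) • u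
      abel⟩
    rw [h7]
    exact dc_smul (inv_nonneg.mpr (le_of_lt hqR)) hqmem
  -- boundedness of the nu set
  have hNex : ∃ N : ℕ, 1 ≤ N ∧ ∀ t : {x // x ∈ A},
      (AddMonoidAlgebra.single (⟨t.1, hAl t.1 t.2⟩ : latt v) (1:k)) ^ N ∈ monIdeal k v B := by
    have hpow : ∀ t : {x // x ∈ A}, ∃ nn : ℕ,
        (AddMonoidAlgebra.single (⟨t.1, hAl t.1 t.2⟩ : latt v) (1:k)) ^ nn ∈ monIdeal k v B := by
      intro t
      have hx : AddMonoidAlgebra.single (⟨t.1, hAl t.1 t.2⟩ : latt v) (1:k) ∈ monIdeal k v A :=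
        Ideal.subset_span ⟨_, t.2, rfl⟩
      exact Ideal.mem_radical_iff.mp (hrad hx)
    choose nn hnn using hpow
    refine ⟨A.attach.sup nn + 1, Nat.le_add_left 1 _, ?_⟩
    intro t
    have hle : nn t ≤ A.attach.sup nn + 1 :=
      le_trans (Finset.le_sup (Finset.mem_attach _ t)) (Nat.le_succ _)
    have h8 : (AddMonoidAlgebra.single (⟨t.1, hAl t.1 t.2⟩ : latt v) (1:k)) ^ (A.attach.sup nn + 1)
        = (AddMonoidAlgebra.single (⟨t.1, hAl t.1 t.2⟩ : latt v) (1:k)) ^ (nn t) *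
          (AddMonoidAlgebra.single (⟨t.1, hAl t.1 t.2⟩ : latt v) (1:k)) ^ (A.attach.sup nn + 1 - nn t) := by
      rw [← pow_add, Nat.add_sub_cancel' hle]
    rw [h8]
    exact Ideal.mul_mem_right _ _ (hnn t)
  obtain ⟨N, hN1, hN⟩ := hNex
  have hNq1 : 1 ≤ N * q := Nat.one_le_iff_ne_zero.mpr (Nat.mul_ne_zero (by omega) (by omega))
  have hMle : monIdeal k v A ^ (m * (N * q)) ≤ bracket (monIdeal k v B) q := by
    rw [show monIdeal k v A = Ideal.span
      {x : Toric k v | ∃ a : latt v, (a : Fin d → ℤ) ∈ A ∧ x = AddMonoidAlgebra.single a 1}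
      from rfl, span_set_pow]
    apply Ideal.span_le.mpr
    intro x hx
    rw [Set.mem_pow] at hx
    obtain ⟨f, hf⟩ := hx
    have hsel : ∀ i : Fin (m * (N * q)), ∃ t : {x // x ∈ A},
        (f i : Toric k v) = AddMonoidAlgebra.single (⟨t.1, hAl t.1 t.2⟩ : latt v) 1 := by
      intro i
      obtain ⟨a, haA, hfa⟩ := (f i).2
      exact ⟨⟨(a : Fin d → ℤ), haA⟩, by rw [hfa]⟩
    choose g hg using hsel
    have hcard : (A.attach).card * (N * q - 1) < (Finset.univ : Finset (Fin (m * (N * q)))).card := by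
      rw [Finset.card_attach, Finset.card_univ, Fintype.card_fin]
      have hsub : N * q - 1 < N * q := Nat.sub_lt hNq1 one_pos
      exact mul_lt_mul_of_pos_left hsub (by omega : 0 < m)
    obtain ⟨t0, ht0, hfib⟩ := Finset.exists_lt_card_fiber_of_mul_lt_card_of_maps_to
      (fun i _ => Finset.mem_attach A (g i)) hcard
    set F := Finset.univ.filter (fun i => g i = t0) with hFdef
    have hFc : N * q ≤ F.card := by omega
    set x0 : Toric k v := AddMonoidAlgebra.single (⟨t0.1, hAl t0.1 t0.2⟩ : latt v) 1 with hx0def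
    have hx' : x = ∏ i, (f i : Toric k v) := by rw [← hf, List.prod_ofFn]
    have hFF : (∏ i ∈ F, (f i : Toric k v)) = x0 ^ F.card := by
      have hconst : ∀ i ∈ F, (f i : Toric k v) = x0 := by
        intro i hi
        have hi' : i ∈ Finset.univ.filter (fun j => g j = t0) := hFdef ▸ hi
        have hit : g i = t0 := (Finset.mem_filter.mp hi').2
        rw [hg i, hit]
      rw [Finset.prod_congr rfl hconst, Finset.prod_const]
    have hprod : x = x0 ^ F.card * ∏ i ∈ Finset.univ.filter (fun i => ¬ g i = t0),
        (f i : Toric k v) := by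
      rw [hx', ← Finset.prod_filter_mul_prod_filter_not Finset.univ (fun i => g i = t0), ← hFdef,
        hFF]
    have hx0mem : x0 ^ F.card ∈ bracket (monIdeal k v B) q := by
      have h9 : (x0 ^ N) ^ q ∈ bracket (monIdeal k v B) q :=
        Ideal.subset_span ⟨x0 ^ N, hN t0, rfl⟩
      have h10 : x0 ^ F.card = (x0 ^ N) ^ q * x0 ^ (F.card - N * q) := by
        rw [← pow_mul, ← pow_add]
        congr 1
        omega
      rw [h10]
      exact Ideal.mul_mem_right _ _ h9
    rw [hprod]
    exact Ideal.mul_mem_right _ _ hx0mem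
  have hbddnu : BddAbove {r' : ℕ | ¬ monIdeal k v A ^ r' ≤ bracket (monIdeal k v B) q} := by
    refine ⟨m * (N * q), fun r' hr' => ?_⟩
    by_contra hgt
    push_neg at hgt
    exact hr' (le_trans (Ideal.pow_le_pow_right (le_of_lt hgt)) hMle)
  have hrin : rt ∈ {r' : ℕ | ¬ monIdeal k v A ^ r' ≤ bracket (monIdeal k v B) q} := by
    intro hle'
    exact hnotin (hle' hmono)
  have hnu : rt ≤ nuF (monIdeal k v A) (monIdeal k v B) q := le_csSup hbddnu hrin
  -- conclude
  rw [hlamS]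
  have hnuR : (rt : ℝ) ≤ ((nuF (monIdeal k v A) (monIdeal k v B) q : ℕ) : ℝ) := by
    exact_mod_cast hnu
  have hgoal : lambda ≤ ((nuF (monIdeal k v A) (monIdeal k v B) q : ℕ) : ℝ) / ((q:ℕ) : ℝ) := by
    rw [le_div_iff₀ hqR]
    calc lambda * (q:ℝ) = (q:ℝ) * lambda := by ring
      _ ≤ (rt:ℝ) := hrtge
      _ ≤ _ := hnuR
  have hcast : ((p:ℝ)) ^ e = ((q:ℕ) : ℝ) := by rw [hqdef]; push_cast; ring
  rw [hcast]
  exact hgoal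


end Paper
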